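/- For every complex number z, the improper integral ∫_0^∞ log|1 - z^2/t^2| dt converges and equals π |Im z|. -/

import Mathlib

open MeasureTheory Real

namespace Stmt18Aux

open Set Filter Topology


lemma integrableOn_log_Ioc01 : IntegrableOn Real.log (Set.Ioc (0:ℝ) 1) := by
  have h := intervalIntegral.integrableOn_deriv_of_nonneg
    (g := fun t : ℝ => t - t * Real.log t) (g' := fun t : ℝ => -Real.log t) (a := 0) (b := 1)
    ((continuous_id.sub Real.continuous_mul_log).continuousOn)
    (fun x hx => by
      have := (hasDerivAt_id x).fun_sub (Real.hasDerivAt_mul_log (ne_of_gt hx.1))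
      exact this.congr_deriv (by ring))
    (fun x hx => by
      have : Real.log x ≤ 0 := Real.log_nonpos hx.1.le hx.2.le
      linarith)
  exact h.neg.congr (Filter.EventuallyEq.of_eq (funext fun t => neg_neg _))

lemma intervalIntegrable_log' (a b : ℝ) : IntervalIntegrable Real.log volume a b := by
  have base : ∀ c : ℝ, 0 ≤ c → IntervalIntegrable Real.log volume 0 c := by
    intro c hc
    have I1 : IntervalIntegrable Real.log volume 0 1 :=
      (intervalIntegrable_iff_integrableOn_Ioc_of_le zero_le_one).2 integrableOn_log_Ioc01
    rcases le_or_gt c 1 with h | h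
    · exact I1.mono_set (Set.uIcc_subset_uIcc_iff_le.2
        (by constructor <;> simp [Set.uIcc_of_le, hc, h] <;> norm_num))
    · exact I1.trans (intervalIntegral.intervalIntegrable_log (by
        simp only [Set.mem_uIcc]; push_neg
        constructor <;> intro h' <;> nlinarith))
  have half : ∀ c : ℝ, IntervalIntegrable Real.log volume 0 c := by
    intro c
    rcases le_total 0 c with hc | hc
    · exact base c hc
    · have := (base (-c) (by linarith)).symm
      have h2 := (IntervalIntegrable.iff_comp_neg).mp this
      simp only [neg_neg, neg_zero] at h2
      have h3 : (fun x : ℝ => Real.log (-x)) = Real.log := funext fun x => Real.log_neg_eq_log x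
      rw [h3] at h2
      exact h2.symm
  exact (half a).symm.trans (half b)

lemma intervalIntegrable_log_sub (c a b : ℝ) :
    IntervalIntegrable (fun t => Real.log (t - c)) volume a b := by
  have := (intervalIntegrable_log' (a - c) (b - c)).comp_sub_right c
  simpa using this

lemma integrableOn_log_abs_sub (w : ℂ) (a b : ℝ) :
    IntegrableOn (fun t : ℝ => Real.log (‖(t:ℂ) - w‖)) (Set.Ioc a b) := by
  rcases le_or_gt b a with hab | hab
  · rw [Set.Ioc_eq_empty (by exact fun h => absurd hab (not_le.2 h))]
    exact integrableOn_empty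
  by_cases him : w.im = 0
  · have hw : w = (w.re : ℂ) := Complex.ext rfl (by simp [him])
    have heq : (fun t : ℝ => Real.log (‖(t:ℂ) - w‖))
        = fun t : ℝ => Real.log (t - w.re) := by
      funext t
      rw [hw, show (t:ℂ) - (w.re:ℂ) = ((t - w.re : ℝ) : ℂ) by push_cast; ring,
        Complex.norm_real, Real.norm_eq_abs, Real.log_abs]
      simp
    rw [heq]
    exact (intervalIntegrable_log_sub w.re a b).1
  · apply (ContinuousOn.integrableOn_compact (isCompact_Icc (a := a) (b := b)) ?_).mono_set
      Set.Ioc_subset_Icc_self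
    apply ContinuousOn.log
    · exact (continuous_norm.comp
        ((Complex.continuous_ofReal.sub continuous_const))).continuousOn
    · intro x _
      rw [norm_ne_zero_iff]
      intro h
      apply him
      have := congrArg Complex.im h
      simpa using this.symm

noncomputable def f (z : ℂ) (t : ℝ) : ℝ := Real.log (‖1 - z^2 / (t:ℂ)^2‖)

lemma log_abs_one_sub_bound {w : ℂ} (hw : ‖w‖ ≤ 1/2) :
    |Real.log (‖1 - w‖)| ≤ 3/2 * ‖w‖ := by
  have h1 : ‖(-w : ℂ)‖ ≤ 1/2 := by rwa [norm_neg]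
  have h2 := Complex.norm_log_one_add_half_le_self h1
  rw [show (1 : ℂ) + -w = 1 - w by ring, norm_neg] at h2
  calc |Real.log (‖1 - w‖)| = |(Complex.log (1 - w)).re| := by rw [Complex.log_re]
    _ ≤ ‖Complex.log (1 - w)‖ := Complex.abs_re_le_norm _
    _ ≤ 3/2 * ‖w‖ := h2
    _ = 3/2 * ‖w‖ := by rfl

lemma measurable_f (z : ℂ) : Measurable (f z) := by
  apply Real.measurable_log.comp
  apply continuous_norm.measurable.comp
  exact (measurable_const.sub ((measurable_const.div
    ((Complex.measurable_ofReal.comp measurable_id).pow_const 2))))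

lemma integrableOn_tail (z : ℂ) {T : ℝ} (hT0 : 0 < T) (hT : 2 * ‖z‖ ≤ T) :
    IntegrableOn (f z) (Set.Ioi T) := by
  have key : ∀ t : ℝ, t ∈ Set.Ioi T → ‖z^2 / (t:ℂ)^2‖ ≤ 1/2 := by
    intro t ht
    simp only [Set.mem_Ioi] at ht
    have ht0 : 0 < t := hT0.trans ht
    rw [norm_div, norm_pow, norm_pow, Complex.norm_real, Real.norm_eq_abs, abs_of_pos ht0]
    rw [div_le_iff₀ (by positivity)]
    nlinarith [norm_nonneg z]
  apply Integrable.mono' (g := fun t : ℝ => 3/2 * (‖z‖)^2 * (t^2)⁻¹)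
  · -- integrable dominating function
    have h2 : IntegrableOn (fun x : ℝ => 3/2 * (‖z‖)^2 * x ^ (-2 : ℝ)) (Set.Ioi T) :=
      (integrableOn_Ioi_rpow_of_lt (a := -2) (by norm_num) hT0).const_mul _
    apply h2.congr_fun ?_ measurableSet_Ioi
    intro x hx
    have hx0 : 0 < x := hT0.trans hx
    have hp : x ^ (-2:ℝ) = (x^(2:ℕ))⁻¹ := by
      rw [Real.rpow_neg hx0.le, show ((2:ℝ)) = ((2:ℕ):ℝ) by norm_num, Real.rpow_natCast]
    simp only [hp]
  · exact ((measurable_f z).aestronglyMeasurable).restrict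
  · filter_upwards [ae_restrict_mem measurableSet_Ioi] with t ht
    have ht0 : 0 < t := hT0.trans ht
    have hb := log_abs_one_sub_bound (key t ht)
    rw [Real.norm_eq_abs]
    calc |f z t| ≤ 3/2 * ‖z^2 / (t:ℂ)^2‖ := hb
      _ = 3/2 * (‖z‖)^2 * (t^2)⁻¹ := by
          rw [norm_div, norm_pow, norm_pow, Complex.norm_real, Real.norm_eq_abs, abs_of_pos ht0]
          ring

lemma key_eq (z : ℂ) {t : ℝ} (ht : 0 < t) (h1 : (t:ℂ) - z ≠ 0) (h2 : (t:ℂ) + z ≠ 0) :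
    f z t = Real.log (‖(t:ℂ) - z‖) + Real.log (‖(t:ℂ) + z‖)
      - 2 * Real.log t := by
  have ht' : (t:ℂ) ≠ 0 := by exact_mod_cast ht.ne'
  have hrw : (1 : ℂ) - z^2 / (t:ℂ)^2 = ((t:ℂ) - z) * ((t:ℂ) + z) / ((t:ℂ))^2 := by
    field_simp; ring
  rw [f, hrw, norm_div, norm_mul, norm_pow, Complex.norm_real, Real.norm_eq_abs, abs_of_pos ht]
  rw [Real.log_div (mul_ne_zero (norm_ne_zero_iff.mpr h1) (norm_ne_zero_iff.mpr h2))
    (by positivity), Real.log_mul (norm_ne_zero_iff.mpr h1) (norm_ne_zero_iff.mpr h2),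
    Real.log_pow]
  push_cast; ring

lemma integrableOn_f (z : ℂ) : IntegrableOn (f z) (Set.Ioi 0) := by
  set T : ℝ := 2 * ‖z‖ + 1 with hTdef
  have hT0 : 0 < T := by positivity
  have hT : 2 * ‖z‖ ≤ T := by simp [hTdef]
  rw [← Set.Ioc_union_Ioi_eq_Ioi hT0.le]
  apply IntegrableOn.union ?_ (integrableOn_tail z hT0 hT)
  have h1 := integrableOn_log_abs_sub z 0 T
  have h2 := integrableOn_log_abs_sub (-z) 0 T
  have h3 : IntegrableOn (fun t : ℝ => Real.log t) (Set.Ioc 0 T) :=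
    (intervalIntegrable_log' 0 T).1
  have hint : IntegrableOn (fun t : ℝ => Real.log (‖(t:ℂ) - z‖)
      + Real.log (‖(t:ℂ) + z‖) - 2 * Real.log t) (Set.Ioc 0 T) := by
    exact Integrable.sub (Integrable.add h1 (by simpa [sub_neg_eq_add, IntegrableOn] using h2))
      (by simpa using h3.const_mul 2)
  apply hint.congr
  have hae : ∀ᵐ t ∂(volume.restrict (Set.Ioc (0:ℝ) T)), t ≠ z.re ∧ t ≠ -z.re := by
    apply ae_restrict_of_ae
    rw [ae_iff]
    refine measure_mono_null (t := ({z.re, -z.re} : Set ℝ)) ?_ ?_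
    · intro x hx
      simp only [Set.mem_setOf_eq, not_and_or, not_not] at hx
      simp only [Set.mem_insert_iff, Set.mem_singleton_iff]
      tauto
    · exact (Set.toFinite ({z.re, -z.re} : Set ℝ)).measure_zero _
  filter_upwards [hae, ae_restrict_mem measurableSet_Ioc] with t ht hmem
  have h1' : (t:ℂ) - z ≠ 0 := by
    intro h
    rw [sub_eq_zero] at h
    exact ht.1 (by rw [← h, Complex.ofReal_re])
  have h2' : (t:ℂ) + z ≠ 0 := by
    intro h
    have : z = -(t:ℂ) := by linear_combination h - (t:ℂ) - z + z
    apply ht.2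
    rw [this]
    simp
  exact (key_eq z hmem.1 h1' h2').symm

lemma tendsto_piece (w : ℂ) :
    Tendsto (fun t : ℝ => ((t:ℂ) + w) * (Complex.log ((t:ℂ) + w) - Complex.log (t:ℂ)))
      atTop (𝓝 w) := by
  rw [tendsto_iff_norm_sub_tendsto_zero]
  apply squeeze_zero' (g := fun t : ℝ => 5/2 * ‖w‖^2 / t)
  · filter_upwards [] with t; positivity
  · filter_upwards [eventually_ge_atTop (2*‖w‖ + 1)] with t ht
    have ht0 : 0 < t := by nlinarith [norm_nonneg w]
    have htC : (t:ℂ) ≠ 0 := by exact_mod_cast ht0.ne'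
    set u : ℂ := w / (t:ℂ) with hu
    have hnu : ‖u‖ = ‖w‖ / t := by
      rw [hu, norm_div, Complex.norm_real, Real.norm_eq_abs, abs_of_pos ht0]
    have hu2 : ‖u‖ ≤ 1/2 := by
      rw [hnu, div_le_iff₀ ht0]; linarith
    have h1u : (1 : ℂ) + u ≠ 0 := by
      intro h
      have h2 : ‖(1:ℂ)‖ ≤ ‖(1:ℂ) + u‖ + ‖u‖ := by
        calc ‖(1:ℂ)‖ = ‖((1:ℂ) + u) - u‖ := by ring_nf
          _ ≤ ‖(1:ℂ) + u‖ + ‖u‖ := norm_sub_le _ _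
      rw [h] at h2; simp only [norm_zero, zero_add, norm_one] at h2
      linarith
    have htu : (t:ℂ) * u = w := by rw [hu]; field_simp
    have h2 : (t:ℂ) * (1 + u) = (t:ℂ) + w := by rw [mul_add, mul_one, htu]
    have hlog : Complex.log ((t:ℂ) + w) = (Real.log t : ℂ) + Complex.log (1 + u) := by
      rw [← h2, Complex.log_ofReal_mul ht0 h1u]
    have hlogt : Complex.log ((t:ℝ):ℂ) = (Real.log t : ℂ) := (Complex.ofReal_log ht0.le).symm
    have hexpr : ((t:ℂ) + w) * (Complex.log ((t:ℂ) + w) - Complex.log (t:ℂ)) - w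
        = (t:ℂ) * ((1 + u) * Complex.log (1 + u) - u) := by
      rw [hlog, hlogt]
      linear_combination (-(Complex.log (1+u))) * h2 + htu
    rw [hexpr, norm_mul, Complex.norm_real, Real.norm_eq_abs, abs_of_pos ht0]
    have e1 : ‖Complex.log (1+u) - u‖ ≤ ‖u‖^2 := by
      have hlt : ‖u‖ < 1 := lt_of_le_of_lt hu2 one_half_lt_one
      have hb := Complex.norm_log_one_add_sub_self_le hlt
      have hpos : (0:ℝ) < 1 - ‖u‖ := by linarith
      have hinv : (1 - ‖u‖)⁻¹ ≤ 2 := by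
        rw [inv_le_comm₀ hpos (by norm_num)]; linarith
      nlinarith [norm_nonneg u, sq_nonneg ‖u‖]
    have e2 : ‖Complex.log (1+u)‖ ≤ 3/2*‖u‖ := Complex.norm_log_one_add_half_le_self hu2
    have e3 : ‖(1+u)*Complex.log (1+u) - u‖ ≤ 5/2*‖u‖^2 := by
      have hrw : (1+u)*Complex.log (1+u) - u = (Complex.log (1+u) - u) + u * Complex.log (1+u) := by
        ring
      rw [hrw]
      calc ‖(Complex.log (1+u) - u) + u * Complex.log (1+u)‖
          ≤ ‖Complex.log (1+u) - u‖ + ‖u * Complex.log (1+u)‖ := norm_add_le _ _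
        _ ≤ ‖u‖^2 + ‖u‖ * (3/2*‖u‖) := by
            apply add_le_add e1
            rw [norm_mul]
            exact mul_le_mul_of_nonneg_left e2 (norm_nonneg u)
        _ = 5/2*‖u‖^2 := by ring
    calc t * ‖(1+u)*Complex.log (1+u) - u‖ ≤ t * (5/2*‖u‖^2) := by
          exact mul_le_mul_of_nonneg_left e3 ht0.le
      _ = 5/2 * ‖w‖^2 / t := by rw [hnu]; field_simp
  · exact tendsto_const_nhds.div_atTop tendsto_id

noncomputable def F (z : ℂ) (t : ℝ) : ℝ :=
  (((t:ℂ) - z) * Complex.log ((t:ℂ) - z) + ((t:ℂ) + z) * Complex.log ((t:ℂ) + z)).re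
    - 2 * (t * Real.log t)

lemma F_eq (z : ℂ) (t : ℝ) :
    F z t = (((t:ℂ) - z) * (Complex.log ((t:ℂ) - z) - Complex.log (t:ℂ))
      + ((t:ℂ) + z) * (Complex.log ((t:ℂ) + z) - Complex.log (t:ℂ))).re := by
  have h0 : ((t:ℂ) - z) * (Complex.log ((t:ℂ) - z) - Complex.log (t:ℂ))
      + ((t:ℂ) + z) * (Complex.log ((t:ℂ) + z) - Complex.log (t:ℂ))
      = (((t:ℂ) - z) * Complex.log ((t:ℂ) - z) + ((t:ℂ) + z) * Complex.log ((t:ℂ) + z))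
        - ((2*t : ℝ):ℂ) * Complex.log (t:ℂ) := by push_cast; ring
  rw [h0, Complex.sub_re, Complex.re_ofReal_mul, Complex.log_re, Complex.norm_real, Real.norm_eq_abs,
    Real.log_abs, F]
  ring

lemma F_tendsto (z : ℂ) : Tendsto (F z) atTop (𝓝 0) := by
  have h1 := tendsto_piece (-z)
  have h2 := tendsto_piece z
  have h3 := (Complex.continuous_re.tendsto _).comp (h1.add h2)
  simp only [neg_add_cancel, Complex.zero_re] at h3
  apply Tendsto.congr' ?_ h3
  filter_upwards [] with t
  rw [F_eq z t]
  simp only [Function.comp, sub_eq_add_neg]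

lemma hasDerivAt_F (z : ℂ) {x : ℝ} (hx : 0 < x) (h1 : (x:ℂ) - z ∈ Complex.slitPlane)
    (h2 : (x:ℂ) + z ∈ Complex.slitPlane) :
    HasDerivAt (F z) (Real.log (‖(x:ℂ) - z‖) + Real.log (‖(x:ℂ) + z‖)
      - 2 * Real.log x) x := by
  have h1' : (x:ℂ) - z ≠ 0 := Complex.slitPlane_ne_zero h1
  have h2' : (x:ℂ) + z ≠ 0 := Complex.slitPlane_ne_zero h2
  have e1 : HasDerivAt (fun w : ℂ => w - z) 1 (x:ℂ) := (hasDerivAt_id _).sub_const z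
  have e1' : HasDerivAt (fun w : ℂ => w + z) 1 (x:ℂ) := (hasDerivAt_id _).add_const z
  have e2 : HasDerivAt (fun w : ℂ => Complex.log (w - z)) (((x:ℂ) - z)⁻¹ * 1) (x:ℂ) :=
    (Complex.hasDerivAt_log h1).comp (h₂ := Complex.log) (x:ℂ) e1
  have e2' : HasDerivAt (fun w : ℂ => Complex.log (w + z)) (((x:ℂ) + z)⁻¹ * 1) (x:ℂ) :=
    (Complex.hasDerivAt_log h2).comp (h₂ := Complex.log) (x:ℂ) e1'
  have d1 : HasDerivAt (fun w : ℂ => (w - z) * Complex.log (w - z) + (w + z) * Complex.log (w + z))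
      (Complex.log ((x:ℂ) - z) + Complex.log ((x:ℂ) + z) + 2) (x:ℂ) := by
    have := ((e1.fun_mul e2).fun_add (e1'.fun_mul e2'))
    refine this.congr_deriv ?_
    symm
    field_simp
    ring
  have dr : HasDerivAt (fun t : ℝ => 2 * (t * Real.log t)) (2 * (Real.log x + 1)) x :=
    (Real.hasDerivAt_mul_log hx.ne').const_mul 2
  have dfin := d1.real_of_complex.fun_sub dr
  refine dfin.congr_deriv ?_
  symm
  simp only [Complex.add_re, Complex.log_re]
  norm_num
  ring

lemma F_zero (z : ℂ) (hz : z.im ≠ 0) : F z 0 = -(π * |z.im|) := by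
  have : F z 0 = ((-z) * Complex.log (-z) + z * Complex.log z).re := by
    simp [F]
  rw [this, Complex.add_re, Complex.mul_re, Complex.mul_re, Complex.log_re, Complex.log_re,
    Complex.log_im, Complex.log_im, Complex.neg_re, Complex.neg_im, norm_neg]
  rcases lt_or_gt_of_ne hz with h | h
  · rw [Complex.arg_neg_eq_arg_add_pi_of_im_neg h, abs_of_neg h]
    ring
  · rw [Complex.arg_neg_eq_arg_sub_pi_of_im_pos h, abs_of_pos h]
    ring

lemma F_contAt_zero (z : ℂ) (hz : z.im ≠ 0) : ContinuousAt (F z) 0 := by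
  have hz1 : ((0:ℝ):ℂ) - z ∈ Complex.slitPlane := Or.inr (by simp [hz])
  have hz2 : ((0:ℝ):ℂ) + z ∈ Complex.slitPlane := Or.inr (by simp [hz])
  have hc : ContinuousAt (fun t : ℝ => (t:ℂ) - z) 0 :=
    (Complex.continuous_ofReal.sub continuous_const).continuousAt
  have hc' : ContinuousAt (fun t : ℝ => (t:ℂ) + z) 0 :=
    (Complex.continuous_ofReal.add continuous_const).continuousAt
  have c1 : ContinuousAt (fun t : ℝ => ((t:ℂ) - z) * Complex.log ((t:ℂ) - z)) 0 :=
    hc.mul (ContinuousAt.comp (x := (0:ℝ)) (g := Complex.log) (continuousAt_clog hz1) hc)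
  have c2 : ContinuousAt (fun t : ℝ => ((t:ℂ) + z) * Complex.log ((t:ℂ) + z)) 0 :=
    hc'.mul (ContinuousAt.comp (x := (0:ℝ)) (g := Complex.log) (continuousAt_clog hz2) hc')
  exact ((Complex.continuous_re.continuousAt.comp (c1.add c2)).sub
    ((continuous_const.mul Real.continuous_mul_log).continuousAt))

lemma key_eq_real (a : ℝ) {t : ℝ} (ht : 0 < t) (h1 : t ≠ a) (h2 : t ≠ -a) :
    f ((a:ℝ):ℂ) t = Real.log (t - a) + Real.log (t + a) - 2 * Real.log t := by
  have h1' : (t:ℂ) - (a:ℂ) ≠ 0 := by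
    rw [show (t:ℂ) - (a:ℂ) = ((t - a : ℝ):ℂ) by push_cast; ring]
    exact_mod_cast sub_ne_zero.2 h1
  have h2' : (t:ℂ) + (a:ℂ) ≠ 0 := by
    rw [show (t:ℂ) + (a:ℂ) = ((t + a : ℝ):ℂ) by push_cast; ring]
    have : t + a ≠ 0 := fun h => h2 (by linarith)
    exact_mod_cast this
  rw [key_eq ((a:ℝ):ℂ) ht h1' h2',
    show (t:ℂ) - (a:ℂ) = ((t - a : ℝ):ℂ) by push_cast; ring,
    show (t:ℂ) + (a:ℂ) = ((t + a : ℝ):ℂ) by push_cast; ring,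
    Complex.norm_real, Real.norm_eq_abs, Complex.norm_real, Real.norm_eq_abs, Real.log_abs, Real.log_abs]

noncomputable def Fr (a : ℝ) (t : ℝ) : ℝ :=
  (t - a) * Real.log (t - a) + (t + a) * Real.log (t + a) - 2 * (t * Real.log t)

lemma Fr_eq_F (a : ℝ) : Fr a = F ((a:ℝ):ℂ) := by
  funext t
  rw [Fr, F, show (t:ℂ) - (a:ℂ) = ((t - a : ℝ):ℂ) by push_cast; ring,
    show (t:ℂ) + (a:ℂ) = ((t + a : ℝ):ℂ) by push_cast; ring, Complex.add_re,
    Complex.re_ofReal_mul, Complex.re_ofReal_mul, Complex.log_re, Complex.log_re,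
    Complex.norm_real, Real.norm_eq_abs, Complex.norm_real, Real.norm_eq_abs, Real.log_abs, Real.log_abs]

lemma Fr_continuous (a : ℝ) : Continuous (Fr a) := by
  apply Continuous.sub
  · exact (Real.continuous_mul_log.comp (continuous_sub_right a)).add
      (Real.continuous_mul_log.comp (continuous_add_right a))
  · exact continuous_const.mul Real.continuous_mul_log

lemma hasDerivAt_Fr (a : ℝ) {x : ℝ} (hx : x ≠ 0) (h1 : x ≠ a) (h2 : x ≠ -a) :
    HasDerivAt (Fr a) (Real.log (x - a) + Real.log (x + a) - 2 * Real.log x) x := by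
  have d1 : HasDerivAt (fun t : ℝ => (t - a) * Real.log (t - a)) (Real.log (x - a) + 1) x := by
    have := (Real.hasDerivAt_mul_log (x := x - a) (sub_ne_zero.2 h1)).comp x
      ((hasDerivAt_id x).sub_const a)
    simpa [Function.comp_def] using this
  have d2 : HasDerivAt (fun t : ℝ => (t + a) * Real.log (t + a)) (Real.log (x + a) + 1) x := by
    have hxa : x + a ≠ 0 := fun h => h2 (by linarith)
    have := (Real.hasDerivAt_mul_log (x := x + a) hxa).comp x
      ((hasDerivAt_id x).add_const a)
    simpa [Function.comp_def] using this
  have d3 : HasDerivAt (fun t : ℝ => 2 * (t * Real.log t)) (2 * (Real.log x + 1)) x :=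
    (Real.hasDerivAt_mul_log hx).const_mul 2
  have := (d1.fun_add d2).fun_sub d3
  exact this.congr_deriv (by ring)

lemma value_real (a : ℝ) (ha : 0 < a) :
    ∫ t in Set.Ioi (0:ℝ), f ((a:ℝ):ℂ) t = 0 := by
  have hsplit : Set.Ioc (0:ℝ) a ∪ Set.Ioi a = Set.Ioi (0:ℝ) := Set.Ioc_union_Ioi_eq_Ioi ha.le
  have hint := integrableOn_f ((a:ℝ):ℂ)
  have hint1 : IntegrableOn (f ((a:ℝ):ℂ)) (Set.Ioc 0 a) :=
    hint.mono_set (fun x hx => hx.1)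
  have hint2 : IntegrableOn (f ((a:ℝ):ℂ)) (Set.Ioi a) :=
    hint.mono_set (fun x hx => lt_trans ha hx)
  have hdisj : Disjoint (Set.Ioc (0:ℝ) a) (Set.Ioi a) := by
    apply Set.disjoint_left.2
    intro x hx hx'
    exact absurd hx.2 (not_le.2 hx')
  rw [← hsplit, setIntegral_union hdisj measurableSet_Ioi hint1 hint2]
  -- first piece
  have hIoc : ∫ t in Set.Ioc (0:ℝ) a, f ((a:ℝ):ℂ) t = Fr a a - Fr a 0 := by
    rw [← intervalIntegral.integral_of_le ha.le]
    apply intervalIntegral.integral_eq_sub_of_hasDeriv_right_of_le ha.le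
      ((Fr_continuous a).continuousOn)
    · intro x hx
      have hd := hasDerivAt_Fr a (ne_of_gt hx.1) (ne_of_lt hx.2) (by nlinarith [hx.1])
      rw [key_eq_real a hx.1 (ne_of_lt hx.2) (by nlinarith [hx.1])]
      exact hd.hasDerivWithinAt
    · rw [intervalIntegrable_iff_integrableOn_Ioc_of_le ha.le]
      exact hint1
  have hIoi : ∫ t in Set.Ioi a, f ((a:ℝ):ℂ) t = 0 - Fr a a := by
    apply integral_Ioi_of_hasDerivAt_of_tendsto
      ((Fr_continuous a).continuousWithinAt)
    · intro x hx
      simp only [Set.mem_Ioi] at hx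
      have hx0 : 0 < x := ha.trans hx
      have hd := hasDerivAt_Fr a hx0.ne' (ne_of_gt hx) (by nlinarith)
      rw [key_eq_real a hx0 (ne_of_gt hx) (by nlinarith)]
      exact hd
    · exact hint2
    · rw [Fr_eq_F]; exact F_tendsto _
  have hFr0 : Fr a 0 = 0 := by
    simp only [Fr, zero_sub, zero_add, Real.log_zero, mul_zero, sub_zero]
    rw [Real.log_neg_eq_log]
    ring
  have hFra : Fr a a = 2 * a * Real.log 2 := by
    simp only [Fr, sub_self, Real.log_zero, mul_zero, zero_mul, zero_add]
    rw [show a + a = 2 * a by ring, Real.log_mul two_ne_zero ha.ne']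
    ring
  rw [hIoc, hIoi, hFr0, hFra]
  ring

lemma value_im_ne (z : ℂ) (hz : z.im ≠ 0) :
    ∫ t in Set.Ioi (0:ℝ), f z t = π * |z.im| := by
  have hs1 : ∀ x : ℝ, (x:ℂ) - z ∈ Complex.slitPlane :=
    fun x => Or.inr (by simp [hz])
  have hs2 : ∀ x : ℝ, (x:ℂ) + z ∈ Complex.slitPlane :=
    fun x => Or.inr (by simp [hz])
  have h := integral_Ioi_of_hasDerivAt_of_tendsto (f := F z) (f' := f z) (a := 0) (m := 0)
    (F_contAt_zero z hz).continuousWithinAt ?_ (integrableOn_f z) (F_tendsto z)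
  · rw [h, F_zero z hz]; ring
  · intro x hx
    simp only [Set.mem_Ioi] at hx
    rw [key_eq z hx (Complex.slitPlane_ne_zero (hs1 x)) (Complex.slitPlane_ne_zero (hs2 x))]
    exact hasDerivAt_F z hx (hs1 x) (hs2 x)

lemma value (z : ℂ) : ∫ t in Set.Ioi (0:ℝ), f z t = π * |z.im| := by
  by_cases him : z.im = 0
  · rw [him, abs_zero, mul_zero]
    by_cases hre : z.re = 0
    · have hz : z = 0 := Complex.ext hre him
      rw [hz]
      simp only [f]
      norm_num
    · have hz : z = ((z.re : ℝ):ℂ) := Complex.ext rfl (by simp [him])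
      have ha : 0 < |z.re| := abs_pos.2 hre
      have hz2 : z^2 = ((|z.re| : ℝ):ℂ)^2 := by
        have h1 : ((|z.re|:ℝ):ℂ)^2 = ((z.re:ℝ):ℂ)^2 := by
          rw [show ((|z.re|:ℝ):ℂ)^2 = ((|z.re|^2:ℝ):ℂ) by push_cast; ring, sq_abs]
          push_cast
          ring
        rw [h1, ← hz]
      have : f z = f ((|z.re| : ℝ):ℂ) := by
        funext t; simp only [f]; rw [hz2]
      rw [this, value_real _ ha]
  · exact value_im_ne z him


end Stmt18Aux

open Stmt18Aux in
theorem stmt18 (z : ℂ) :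
    IntegrableOn (fun t : ℝ => Real.log (‖1 - z^2 / (t : ℂ)^2‖)) (Set.Ioi 0) ∧
    ∫ t in Set.Ioi (0 : ℝ), Real.log (‖1 - z^2 / (t : ℂ)^2‖) = π * |z.im| := by
  exact ⟨integrableOn_f z, value z⟩
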